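/- The bracket {x,y} = (-1)^{|x|}Δ(x•y) − (-1)^{|x|}Δ(x)•y − x•Δ(y) on TA is graded anti-symmetric: {x,y} = −(-1)^{(|x|+1)(|y|+1)} {y,x}. -/

import Mathlib

open Finsupp

noncomputable section
open scoped Classical

/-- The sign `(-1)^k` for an integer `k`. -/
def sgn (k : ℤ) : ℤ := if Even k then 1 else -1

variable (R : Type*) [CommRing R]

/-- The underlying space of the tensor algebra of a graded module `A` with
homogeneous basis `B`: the free `R`-module on the set of words in `B`. -/
abbrev TA (B : Type*) := List B →₀ R

variable {R}
variable {B : Type*} (deg : B → ℤ)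

/-- The shifted degree `|a₁| + ⋯ + |aₙ| + n` of a monomial `a₁ ⊗ ⋯ ⊗ aₙ`. -/
def degList (l : List B) : ℤ := (l.map (fun b => deg b + 1)).sum

/-- An element of `TA` is homogeneous of (shifted) degree `p` if it is supported
on monomials of shifted degree `p`. -/
def IsHomog (x : TA R B) (p : ℤ) : Prop := ∀ l ∈ x.support, degList deg l = p

/-- `σ` is an `(n, N-n)`-shuffle: it is increasing on the first `n` and on the last
`N - n` positions. -/
def IsShuffle (n : ℕ) {N : ℕ} (σ : Equiv.Perm (Fin N)) : Prop :=
  ∀ i j : Fin N, i < j →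
    (((i : ℕ) < n ∧ (j : ℕ) < n) ∨ (n ≤ (i : ℕ) ∧ n ≤ (j : ℕ))) → σ i < σ j

/-- The word obtained by permuting the letters of `l` by `σ`; the letter at position `i`
of the result is `a_{σ⁻¹(i)}`. -/
def permList (l : List B) (σ : Equiv.Perm (Fin l.length)) : List B :=
  List.ofFn (fun i => l.get (σ⁻¹ i))

/-- The Koszul sign exponent of the permutation `σ` acting on the word `l`, with respect to
the shifted degrees: a factor `(|a_i|+1)(|a_j|+1)` for each transposed pair. -/
def koszul (l : List B) (σ : Equiv.Perm (Fin l.length)) : ℤ :=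
  ∑ p ∈ Finset.univ.filter
      (fun p : Fin l.length × Fin l.length => p.1 < p.2 ∧ σ p.2 < σ p.1),
    (deg (l.get p.1) + 1) * (deg (l.get p.2) + 1)

/-- The shuffle product of two monomials. -/
def shMulMono (l₁ l₂ : List B) : TA R B :=
  ∑ σ ∈ Finset.univ.filter
      (fun σ : Equiv.Perm (Fin (l₁ ++ l₂).length) => IsShuffle l₁.length σ),
    sgn (koszul deg (l₁ ++ l₂) σ) • Finsupp.single (permList (l₁ ++ l₂) σ) (1 : R)

/-- The shuffle product `• : TA ⊗ TA → TA`. -/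
def shMul (x y : TA R B) : TA R B :=
  x.sum fun l₁ c₁ => y.sum fun l₂ c₂ => (c₁ * c₂) • shMulMono deg l₁ l₂

/-- Replace the letter at position `i` of `l` by the element `x` of `A`, extended linearly. -/
def replaceAt (l : List B) (i : ℕ) (x : B →₀ R) : TA R B :=
  x.sum fun b c => Finsupp.single (l.set i b) c

/-- The coderivation extension to `TA` of a degree `+1` map `d_A : A → A`,
`d(a₁ ⊗ ⋯ ⊗ aₙ) = Σᵢ (-1)^{|a₁|+⋯+|a_{i-1}|+i-1} a₁ ⊗ ⋯ ⊗ d_A(aᵢ) ⊗ ⋯ ⊗ aₙ`. -/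
def dCoder (dA : B → (B →₀ R)) (x : TA R B) : TA R B :=
  x.sum fun l c => c •
    ∑ i : Fin l.length,
      sgn (((l.take i).map deg).sum + i) • replaceAt l i (dA (l.get i))

/-- Replace the two letters at positions `i, i+1` of `l` by the element `x` of `A`,
extended linearly. -/
def replace2At (l : List B) (i : ℕ) (x : B →₀ R) : TA R B :=
  x.sum fun b c => Finsupp.single (l.take i ++ b :: l.drop (i + 2)) c

/-- The coderivation extension to `TA` of a product `μ_A : A ⊗ A → A`,
`Δ(a₁ ⊗ ⋯ ⊗ aₙ) = Σᵢ (-1)^{|a₁|+⋯+|aᵢ|+i-1} a₁ ⊗ ⋯ ⊗ μ_A(aᵢ, a_{i+1}) ⊗ ⋯ ⊗ aₙ`. -/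
def deltaCoder (mu : B → B → (B →₀ R)) (x : TA R B) : TA R B :=
  x.sum fun l c => c •
    ∑ i : Fin (l.length - 1),
      sgn (((l.take (i + 1)).map deg).sum + i) •
        replace2At l i
          (mu (l.get ⟨i, by have := i.2; omega⟩) (l.get ⟨i + 1, by have := i.2; omega⟩))

/-- The linear extension to `A` of a map defined on the basis `B`. -/
def extLin (dA : B → (B →₀ R)) (x : B →₀ R) : B →₀ R := x.sum fun b c => c • dA b

/-- The bilinear extension to `A` of a product defined on the basis `B`. -/
def extBil (mu : B → B → (B →₀ R)) (x y : B →₀ R) : B →₀ R :=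
  x.sum fun a c => y.sum fun b c' => (c * c') • mu a b

/-- `d_A` is homogeneous of degree `+1`. -/
def DAHomog (dA : B → (B →₀ R)) : Prop :=
  ∀ b : B, ∀ b' ∈ (dA b).support, deg b' = deg b + 1

/-- `μ_A` is homogeneous of degree `0`. -/
def MuHomog (mu : B → B → (B →₀ R)) : Prop :=
  ∀ a b : B, ∀ c ∈ (mu a b).support, deg c = deg a + deg b

/-- The deviation `{x,y} = (-1)^{|x|} Δ(x•y) - (-1)^{|x|} Δ(x)•y - x•Δ(y)` of `Δ` from
being a derivation of the shuffle product, for `x` homogeneous of shifted degree `p`. -/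
def brTA (mu : B → B → (B →₀ R)) (p : ℤ) (x y : TA R B) : TA R B :=
  sgn p • deltaCoder deg mu (shMul deg x y)
    - sgn p • shMul deg (deltaCoder deg mu x) y
    - shMul deg x (deltaCoder deg mu y)



-- ### sgn lemmas
lemma sgn_mul_self (a : ℤ) : sgn a * sgn a = 1 := by
  unfold sgn; split <;> ring

lemma sgn_add (a b : ℤ) : sgn (a + b) = sgn a * sgn b := by
  by_cases ha : Even a <;> by_cases hb : Even b <;>
    simp [sgn, Int.even_add, ha, hb]

lemma sgn_eq_of_even_sub {a b : ℤ} (h : Even (a - b)) : sgn a = sgn b := by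
  unfold sgn
  have hiff : Even a ↔ Even b := by
    constructor <;> intro hh
    · have := hh.sub h; simpa using this
    · have := h.add hh; simpa using this
  split <;> split <;> simp_all

-- ### linearity lemmas
lemma shMul_zsmul_left (z : ℤ) (x y : TA R B) :
    shMul deg (z • x) y = z • shMul deg x y := by
  unfold shMul
  rw [Finsupp.smul_sum, Finsupp.sum_smul_index']
  · refine Finsupp.sum_congr fun l _ => ?_
    rw [Finsupp.smul_sum]
    refine Finsupp.sum_congr fun l' _ => ?_
    rw [smul_mul_assoc, smul_assoc]
  · intro l; simp

lemma shMul_zsmul_right (z : ℤ) (x y : TA R B) :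
    shMul deg x (z • y) = z • shMul deg x y := by
  unfold shMul
  rw [Finsupp.smul_sum]
  refine Finsupp.sum_congr fun l _ => ?_
  rw [Finsupp.smul_sum, Finsupp.sum_smul_index']
  · refine Finsupp.sum_congr fun l' _ => ?_
    rw [mul_smul_comm, smul_assoc]
  · intro l'; simp

lemma deltaCoder_zsmul (mu : B → B → (B →₀ R)) (z : ℤ) (x : TA R B) :
    deltaCoder deg mu (z • x) = z • deltaCoder deg mu x := by
  unfold deltaCoder
  rw [Finsupp.smul_sum, Finsupp.sum_smul_index']
  · refine Finsupp.sum_congr fun l _ => ?_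
    rw [smul_assoc]
  · intro l; simp

lemma IsHomog.zsmul {x : TA R B} {p : ℤ} (h : IsHomog deg x p) (z : ℤ) :
    IsHomog deg (z • x) p := by
  intro l hl
  exact h l (Finsupp.support_smul hl)

lemma degList_append (l₁ l₂ : List B) :
    degList deg (l₁ ++ l₂) = degList deg l₁ + degList deg l₂ := by
  simp [degList]

lemma degList_cons (b : B) (l : List B) :
    degList deg (b :: l) = (deg b + 1) + degList deg l := by
  simp [degList]

lemma degList_split (l : List B) (i : ℕ) (hi : i + 1 < l.length) :
    degList deg l = degList deg (l.take i) + (deg (l.get ⟨i, by omega⟩) + 1)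
      + (deg (l.get ⟨i + 1, by omega⟩) + 1) + degList deg (l.drop (i + 2)) := by
  conv_lhs => rw [← List.take_append_drop i l]
  rw [degList_append]
  rw [List.drop_eq_getElem_cons (by omega), degList_cons]
  rw [List.drop_eq_getElem_cons (by omega : i + 1 < l.length), degList_cons]
  simp only [List.get_eq_getElem]
  ring_nf

lemma deltaCoder_homog (mu : B → B → (B →₀ R)) (hm : MuHomog deg mu) {p : ℤ} {x : TA R B}
    (hx : IsHomog deg x p) : IsHomog deg (deltaCoder deg mu x) (p - 1) := by
  intro l' hl'
  unfold deltaCoder at hl'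
  obtain ⟨l, hl, hl'2⟩ := Finset.mem_biUnion.mp (Finsupp.support_sum hl')
  replace hl'2 := Finsupp.support_smul hl'2
  obtain ⟨i, _, hl'3⟩ := Finset.mem_biUnion.mp (Finsupp.support_finset_sum hl'2)
  replace hl'3 := Finsupp.support_smul hl'3
  unfold replace2At at hl'3
  obtain ⟨b, hb, hl'4⟩ := Finset.mem_biUnion.mp (Finsupp.support_sum hl'3)
  have hl'5 : l' = l.take i ++ b :: l.drop (i + 2) := by
    have := Finsupp.support_single_subset hl'4
    simpa using this
  have hi : (i : ℕ) + 1 < l.length := by have := i.2; omega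
  have hdeg := hm _ _ _ hb
  have hsplit := degList_split deg l i hi
  have hxl := hx l hl
  rw [hl'5, degList_append, degList_cons, hdeg]
  omega

-- ### the block-flip equivalence
def flipE (l₁ l₂ : List B) : Fin ((l₂ ++ l₁).length) ≃ Fin ((l₁ ++ l₂).length) where
  toFun p := ⟨if (p : ℕ) < l₂.length then p + l₁.length else p - l₂.length, by
    have := p.2; simp only [List.length_append] at *; split <;> omega⟩
  invFun q := ⟨if (q : ℕ) < l₁.length then q + l₂.length else q - l₁.length, by
    have := q.2; simp only [List.length_append] at *; split <;> omega⟩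
  left_inv p := by
    have := p.2; simp only [List.length_append] at this
    ext; simp only; split_ifs <;> omega
  right_inv q := by
    have := q.2; simp only [List.length_append] at this
    ext; simp only; split_ifs <;> omega

lemma flipE_val (l₁ l₂ : List B) (p : Fin ((l₂ ++ l₁).length)) :
    ((flipE l₁ l₂ p : Fin ((l₁ ++ l₂).length)) : ℕ)
      = if (p : ℕ) < l₂.length then p + l₁.length else p - l₂.length := rfl

lemma flipE_symm (l₁ l₂ : List B) : (flipE l₁ l₂).symm = flipE l₂ l₁ :=
  Equiv.ext fun _ => rfl

lemma flipE_flipE (l₁ l₂ : List B) (p : Fin ((l₁ ++ l₂).length)) :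
    flipE l₁ l₂ (flipE l₂ l₁ p) = p := by
  rw [← flipE_symm l₂ l₁]; exact (flipE l₂ l₁).symm_apply_apply p

lemma get_flipE (l₁ l₂ : List B) (j : Fin ((l₁ ++ l₂).length)) :
    (l₂ ++ l₁).get (flipE l₂ l₁ j) = (l₁ ++ l₂).get j := by
  have hj := j.2
  simp only [List.length_append] at hj
  simp only [List.get_eq_getElem, List.getElem_append, flipE_val]
  split_ifs <;> first
    | omega
    | rfl
    | (congr 1 <;> omega)

lemma lenE (l₁ l₂ : List B) : (l₁ ++ l₂).length = (l₂ ++ l₁).length := by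
  simp [List.length_append, Nat.add_comm]

-- ### the flipped permutation
def flipP (l₁ l₂ : List B) (σ : Equiv.Perm (Fin ((l₁ ++ l₂).length))) :
    Equiv.Perm (Fin ((l₂ ++ l₁).length)) :=
  ((flipE l₁ l₂).trans σ).trans (finCongr (lenE l₁ l₂))

lemma flipP_val (l₁ l₂ : List B) (σ : Equiv.Perm (Fin ((l₁ ++ l₂).length)))
    (p : Fin ((l₂ ++ l₁).length)) :
    ((flipP l₁ l₂ σ p : Fin ((l₂ ++ l₁).length)) : ℕ) = ((σ (flipE l₁ l₂ p) : Fin _) : ℕ) := rfl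

lemma flipP_flipP (l₁ l₂ : List B) (σ : Equiv.Perm (Fin ((l₁ ++ l₂).length))) :
    flipP l₂ l₁ (flipP l₁ l₂ σ) = σ := by
  apply Equiv.ext
  intro p
  apply Fin.ext
  rw [flipP_val, flipP_val, flipE_flipE]

lemma flipP_shuffle (l₁ l₂ : List B) (σ : Equiv.Perm (Fin ((l₁ ++ l₂).length)))
    (hσ : IsShuffle l₁.length σ) : IsShuffle l₂.length (flipP l₁ l₂ σ) := by
  intro p₁ p₂ hlt hblocks
  rw [Fin.lt_def, flipP_val, flipP_val]
  have h1 := (flipE l₁ l₂ p₁).2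
  have h2 := (flipE l₁ l₂ p₂).2
  simp only [List.length_append] at h1 h2
  have hp1 := p₁.2; have hp2 := p₂.2
  simp only [List.length_append] at hp1 hp2
  have hv1 := flipE_val l₁ l₂ p₁
  have hv2 := flipE_val l₁ l₂ p₂
  rw [← Fin.lt_def]
  apply hσ _ _ ?_ ?_
  · rw [Fin.lt_def, hv1, hv2]
    rw [Fin.lt_def] at hlt
    split_ifs <;> omega
  · rw [Fin.lt_def] at hlt
    rcases hblocks with ⟨ha, hb⟩ | ⟨ha, hb⟩
    · refine Or.inr ⟨?_, ?_⟩
      · rw [hv1]; split_ifs <;> omega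
      · rw [hv2]; split_ifs <;> omega
    · refine Or.inl ⟨?_, ?_⟩
      · rw [hv1]; split_ifs <;> omega
      · rw [hv2]; split_ifs <;> omega

lemma flipP_inv_apply (l₁ l₂ : List B) (σ : Equiv.Perm (Fin ((l₁ ++ l₂).length)))
    (p : Fin ((l₂ ++ l₁).length)) :
    (flipP l₁ l₂ σ)⁻¹ p = flipE l₂ l₁ (σ⁻¹ ((finCongr (lenE l₁ l₂)).symm p)) := by
  show ((flipE l₁ l₂).trans σ |>.trans (finCongr (lenE l₁ l₂))).symm p = _
  rw [Equiv.symm_trans_apply, Equiv.symm_trans_apply, flipE_symm]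
  rfl

lemma permList_flip (l₁ l₂ : List B) (σ : Equiv.Perm (Fin ((l₁ ++ l₂).length))) :
    permList (l₂ ++ l₁) (flipP l₁ l₂ σ) = permList (l₁ ++ l₂) σ := by
  apply List.ext_getElem
  · simp [permList, lenE l₂ l₁]
  intro k h1 h2
  simp only [permList, List.getElem_ofFn]
  rw [flipP_inv_apply, get_flipE]
  exact congrArg _ (congrArg _ (Fin.ext rfl))

lemma degList_eq_sum (l : List B) :
    degList deg l = ∑ i : Fin l.length, (deg (l.get i) + 1) := by
  unfold degList
  conv_lhs => rw [← List.ofFn_get l, List.map_ofFn, List.sum_ofFn]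
  rfl

lemma degList_mul (l₁ l₂ : List B) :
    degList deg l₁ * degList deg l₂ =
      ∑ p ∈ Finset.univ.filter (fun p : Fin ((l₁ ++ l₂).length) × Fin ((l₁ ++ l₂).length) =>
          p.1 < p.2 ∧ ((p.1 : ℕ) < l₁.length ∧ l₁.length ≤ (p.2 : ℕ))),
        (deg ((l₁ ++ l₂).get p.1) + 1) * (deg ((l₁ ++ l₂).get p.2) + 1) := by
  rw [degList_eq_sum, degList_eq_sum, Finset.sum_mul_sum, ← Fintype.sum_prod_type']
  have hlen : (l₁ ++ l₂).length = l₁.length + l₂.length := List.length_append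
  refine Finset.sum_bij'
    (i := fun (q : Fin l₁.length × Fin l₂.length) _ =>
      ((⟨q.1, by omega⟩ : Fin ((l₁ ++ l₂).length)), (⟨l₁.length + q.2, by omega⟩ :
        Fin ((l₁ ++ l₂).length))))
    (j := fun (p : Fin ((l₁ ++ l₂).length) × Fin ((l₁ ++ l₂).length)) hp =>
      ((⟨p.1, by
          simp only [Finset.mem_filter] at hp; exact hp.2.2.1⟩ : Fin l₁.length),
       (⟨p.2 - l₁.length, by
          simp only [Finset.mem_filter] at hp
          have := p.2.2; omega⟩ : Fin l₂.length)))
    ?_ ?_ ?_ ?_ ?_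
  · intro q _
    simp only [Finset.mem_filter, Finset.mem_univ, true_and]
    refine ⟨?_, ?_, ?_⟩
    · rw [Fin.lt_def]; show (q.1 : ℕ) < l₁.length + (q.2 : ℕ); omega
    · show (q.1 : ℕ) < l₁.length; exact q.1.2
    · show l₁.length ≤ l₁.length + (q.2 : ℕ); omega
  · intro p hp; exact Finset.mem_univ _
  · intro q _
    ext
    · rfl
    · show ((l₁.length + (q.2:ℕ)) - l₁.length) = (q.2 : ℕ); omega
  · intro p hp
    simp only [Finset.mem_filter] at hp
    have h2 := hp.2.2.2
    ext
    · rfl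
    · show l₁.length + ((p.2 : ℕ) - l₁.length) = (p.2 : ℕ); omega
  · intro q _
    have hb1 : (q.1 : ℕ) < (l₁ ++ l₂).length := by
      have := q.1.2; simp only [List.length_append]; omega
    have hb2 : l₁.length + (q.2 : ℕ) < (l₁ ++ l₂).length := by
      have := q.2.2; simp only [List.length_append]; omega
    have e1 : (l₁ ++ l₂)[(q.1 : ℕ)]'hb1 = l₁[(q.1 : ℕ)]'q.1.2 := by
      rw [List.getElem_append, dif_pos q.1.2]
    have e2 : (l₁ ++ l₂)[l₁.length + (q.2 : ℕ)]'hb2 = l₂[(q.2 : ℕ)]'q.2.2 := by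
      rw [List.getElem_append, dif_neg (by omega)]
      congr 1
      omega
    show (deg (l₁.get q.1) + 1) * (deg (l₂.get q.2) + 1)
      = (deg ((l₁ ++ l₂)[(q.1 : ℕ)]'hb1) + 1) * (deg ((l₁ ++ l₂)[l₁.length + (q.2 : ℕ)]'hb2) + 1)
    rw [e1, e2]
    rfl

lemma koszul_flip_sum (l₁ l₂ : List B) (σ : Equiv.Perm (Fin ((l₁ ++ l₂).length))) :
    koszul deg (l₂ ++ l₁) (flipP l₁ l₂ σ) =
      ∑ p ∈ Finset.univ.filter
          (fun p : Fin ((l₁ ++ l₂).length) × Fin ((l₁ ++ l₂).length) =>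
            p.1 < p.2 ∧ Xor' (σ p.2 < σ p.1) ((p.1 : ℕ) < l₁.length ∧ l₁.length ≤ (p.2 : ℕ))),
        (deg ((l₁ ++ l₂).get p.1) + 1) * (deg ((l₁ ++ l₂).get p.2) + 1) := by
  have hlen1 : (l₁ ++ l₂).length = l₁.length + l₂.length := List.length_append
  have hlen2 : (l₂ ++ l₁).length = l₂.length + l₁.length := List.length_append
  have key : ∀ a : Fin ((l₂ ++ l₁).length),
      ((flipE l₁ l₂ a : Fin ((l₁ ++ l₂).length)) : ℕ)
        = if (a : ℕ) < l₂.length then (a : ℕ) + l₁.length else (a : ℕ) - l₂.length :=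
    fun a => flipE_val l₁ l₂ a
  have key2 : ∀ a : Fin ((l₁ ++ l₂).length),
      ((flipE l₂ l₁ a : Fin ((l₂ ++ l₁).length)) : ℕ)
        = if (a : ℕ) < l₁.length then (a : ℕ) + l₂.length else (a : ℕ) - l₁.length :=
    fun a => flipE_val l₂ l₁ a
  unfold koszul
  refine Finset.sum_bij'
    (i := fun (q : Fin ((l₂ ++ l₁).length) × Fin ((l₂ ++ l₁).length)) _ =>
      if flipE l₁ l₂ q.1 < flipE l₁ l₂ q.2
      then (flipE l₁ l₂ q.1, flipE l₁ l₂ q.2)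
      else (flipE l₁ l₂ q.2, flipE l₁ l₂ q.1))
    (j := fun (p : Fin ((l₁ ++ l₂).length) × Fin ((l₁ ++ l₂).length)) _ =>
      if flipE l₂ l₁ p.1 < flipE l₂ l₁ p.2
      then (flipE l₂ l₁ p.1, flipE l₂ l₁ p.2)
      else (flipE l₂ l₁ p.2, flipE l₂ l₁ p.1))
    ?_ ?_ ?_ ?_ ?_
  · intro q hq
    simp only [Finset.mem_filter, Finset.mem_univ, true_and] at hq ⊢
    obtain ⟨hq1, hq2⟩ := hq
    rw [Fin.lt_def] at hq1
    rw [Fin.lt_def, flipP_val, flipP_val] at hq2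
    have b1 : (q.1 : ℕ) < l₂.length + l₁.length := lt_of_lt_of_eq q.1.2 hlen2
    have b2 : (q.2 : ℕ) < l₂.length + l₁.length := lt_of_lt_of_eq q.2.2 hlen2
    have k1 := key q.1; have k2 := key q.2
    by_cases h : flipE l₁ l₂ q.1 < flipE l₁ l₂ q.2
    · simp only [if_pos h]
      have hv := h; rw [Fin.lt_def] at hv
      refine ⟨h, Or.inl ⟨?_, ?_⟩⟩
      · rw [Fin.lt_def]; exact hq2
      · rintro ⟨hc1, hc2⟩
        split_ifs at k1 k2 <;> omega
    · simp only [if_neg h]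
      have hle := Fin.not_lt.mp h
      rw [Fin.le_def] at hle
      have hne : ((flipE l₁ l₂ q.1 : Fin ((l₁ ++ l₂).length)) : ℕ)
          ≠ ((flipE l₁ l₂ q.2 : Fin ((l₁ ++ l₂).length)) : ℕ) := by
        intro hcon
        have heq : q.1 = q.2 := (flipE l₁ l₂).injective (Fin.ext hcon)
        rw [heq] at hq1; exact lt_irrefl _ hq1
      refine ⟨?_, Or.inr ⟨⟨?_, ?_⟩, ?_⟩⟩
      · rw [Fin.lt_def]; omega
      · split_ifs at k1 k2 <;> omega
      · split_ifs at k1 k2 <;> omega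
      · intro hcon
        rw [Fin.lt_def] at hcon
        omega
  · intro p hp
    simp only [Finset.mem_filter, Finset.mem_univ, true_and] at hp ⊢
    obtain ⟨hp1, hp2⟩ := hp
    have hp1' := hp1; rw [Fin.lt_def] at hp1'
    have b1 : (p.1 : ℕ) < l₁.length + l₂.length := lt_of_lt_of_eq p.1.2 hlen1
    have b2 : (p.2 : ℕ) < l₁.length + l₂.length := lt_of_lt_of_eq p.2.2 hlen1
    have k1 := key2 p.1; have k2 := key2 p.2
    have hne : ((σ p.1 : Fin ((l₁ ++ l₂).length)) : ℕ) ≠ ((σ p.2 : Fin _) : ℕ) := by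
      intro hcon
      have heq : p.1 = p.2 := σ.injective (Fin.ext hcon)
      rw [heq] at hp1; exact lt_irrefl _ hp1
    by_cases h : flipE l₂ l₁ p.1 < flipE l₂ l₁ p.2
    · simp only [if_pos h]
      have hv := h; rw [Fin.lt_def] at hv
      have hncross : ¬ ((p.1 : ℕ) < l₁.length ∧ l₁.length ≤ (p.2 : ℕ)) := by
        rintro ⟨hc1, hc2⟩; split_ifs at k1 k2 <;> omega
      have hinv : σ p.2 < σ p.1 := by
        rcases hp2 with ⟨hi, _⟩ | ⟨hc, _⟩
        · exact hi
        · exact absurd hc hncross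
      refine ⟨h, ?_⟩
      rw [Fin.lt_def, flipP_val, flipP_val, flipE_flipE, flipE_flipE]
      rw [Fin.lt_def] at hinv; exact hinv
    · simp only [if_neg h]
      have hle := Fin.not_lt.mp h
      rw [Fin.le_def] at hle
      have hnev : ((flipE l₂ l₁ p.1 : Fin ((l₂ ++ l₁).length)) : ℕ)
          ≠ ((flipE l₂ l₁ p.2 : Fin ((l₂ ++ l₁).length)) : ℕ) := by
        intro hcon
        have heq : p.1 = p.2 := (flipE l₂ l₁).injective (Fin.ext hcon)
        rw [heq] at hp1; exact lt_irrefl _ hp1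
      have hcross : (p.1 : ℕ) < l₁.length ∧ l₁.length ≤ (p.2 : ℕ) := by
        split_ifs at k1 k2 <;> refine ⟨by omega, by omega⟩
      have hninv : ¬ (σ p.2 < σ p.1) := by
        rcases hp2 with ⟨_, hnc⟩ | ⟨_, hni⟩
        · exact absurd hcross hnc
        · exact hni
      rw [Fin.lt_def] at hninv
      refine ⟨?_, ?_⟩
      · rw [Fin.lt_def]; omega
      · rw [Fin.lt_def, flipP_val, flipP_val, flipE_flipE, flipE_flipE]
        omega
  · intro q hq
    simp only [Finset.mem_filter, Finset.mem_univ, true_and] at hq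
    by_cases h : flipE l₁ l₂ q.1 < flipE l₁ l₂ q.2
    · simp only [if_pos h, flipE_flipE, if_pos hq.1]
    · simp only [if_neg h, flipE_flipE, if_neg (asymm hq.1)]
  · intro p hp
    simp only [Finset.mem_filter, Finset.mem_univ, true_and] at hp
    by_cases h : flipE l₂ l₁ p.1 < flipE l₂ l₁ p.2
    · simp only [if_pos h, flipE_flipE, if_pos hp.1]
    · simp only [if_neg h, flipE_flipE, if_neg (asymm hp.1)]
  · intro q hq
    by_cases h : flipE l₁ l₂ q.1 < flipE l₁ l₂ q.2
    · simp only [if_pos h, get_flipE l₂ l₁]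
    · simp only [if_neg h, get_flipE l₂ l₁]
      ring

lemma even_ite_combo (lt inv cross : Prop) [Decidable (lt ∧ Xor' inv cross)]
    [Decidable (lt ∧ cross)] [Decidable (lt ∧ inv)] (t : ℤ) :
    Even ((if lt ∧ Xor' inv cross then t else 0)
      - ((if lt ∧ cross then t else 0) + (if lt ∧ inv then t else 0))) := by
  by_cases h1 : lt <;> by_cases h2 : inv <;> by_cases h3 : cross <;>
    simp [h1, h2, h3, Xor', sub_self] <;>
    exact ⟨-t, by ring⟩

lemma koszul_flip (l₁ l₂ : List B) (σ : Equiv.Perm (Fin ((l₁ ++ l₂).length))) :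
    sgn (koszul deg (l₂ ++ l₁) (flipP l₁ l₂ σ))
      = sgn (degList deg l₁ * degList deg l₂) * sgn (koszul deg (l₁ ++ l₂) σ) := by
  rw [← sgn_add]
  apply sgn_eq_of_even_sub
  rw [koszul_flip_sum deg l₁ l₂ σ, degList_mul deg l₁ l₂]
  unfold koszul
  rw [Finset.sum_filter, Finset.sum_filter, Finset.sum_filter, ← Finset.sum_add_distrib,
    ← Finset.sum_sub_distrib]
  apply Finset.even_sum
  intro p _
  exact even_ite_combo _ _ _ _

lemma sgn_succ (a : ℤ) : sgn (a + 1) = -sgn a := by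
  by_cases h : Even a <;> simp [sgn, Int.even_add_one, h]

lemma shMulMono_comm (l₁ l₂ : List B) :
    shMulMono (R := R) deg l₂ l₁
      = sgn (degList deg l₁ * degList deg l₂) • shMulMono (R := R) deg l₁ l₂ := by
  unfold shMulMono
  rw [Finset.smul_sum]
  refine Finset.sum_nbij' (i := flipP l₂ l₁) (j := flipP l₁ l₂) ?_ ?_ ?_ ?_ ?_
  · intro τ hτ
    simp only [Finset.mem_filter, Finset.mem_univ, true_and] at hτ ⊢
    exact flipP_shuffle l₂ l₁ τ hτ
  · intro σ hσ
    simp only [Finset.mem_filter, Finset.mem_univ, true_and] at hσ ⊢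
    exact flipP_shuffle l₁ l₂ σ hσ
  · intro τ _; exact flipP_flipP l₂ l₁ τ
  · intro σ _; exact flipP_flipP l₁ l₂ σ
  · intro τ _
    have hτ' : τ = flipP l₁ l₂ (flipP l₂ l₁ τ) := (flipP_flipP l₂ l₁ τ).symm
    rw [hτ', koszul_flip, permList_flip, mul_smul, flipP_flipP]

lemma shMul_comm (p q : ℤ) (x y : TA R B) (hx : IsHomog deg x p) (hy : IsHomog deg y q) :
    shMul deg x y = sgn (p * q) • shMul deg y x := by
  unfold shMul
  rw [Finsupp.smul_sum, Finsupp.sum_comm]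
  refine Finsupp.sum_congr fun l₂ hl₂ => ?_
  rw [Finsupp.smul_sum]
  refine Finsupp.sum_congr fun l₁ hl₁ => ?_
  rw [shMulMono_comm deg l₂ l₁, hx l₁ hl₁, hy l₂ hl₂, mul_comm q p,
    mul_comm (y l₂) (x l₁)]
  exact smul_comm _ _ _

/-- The bracket `{x,y} = (-1)^{|x|}Δ(x•y) − (-1)^{|x|}Δ(x)•y − x•Δ(y)`
on `TA` is graded anti-symmetric: `{x,y} = −(-1)^{(|x|+1)(|y|+1)} {y,x}`. -/
theorem bracket_antisymm (mu : B → B → (B →₀ R)) (hmdeg : MuHomog deg mu)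
    (p q : ℤ) (x y : TA R B) (hx : IsHomog deg x p) (hy : IsHomog deg y q) :
    brTA deg mu p x y = -sgn ((p + 1) * (q + 1)) • brTA deg mu q y x := by
  have hDx := deltaCoder_homog deg mu hmdeg hx
  have hDy := deltaCoder_homog deg mu hmdeg hy
  have h1 := shMul_comm deg p q x y hx hy
  have h2 := shMul_comm deg (p - 1) q (deltaCoder deg mu x) y hDx hy
  have h3 := shMul_comm deg p (q - 1) x (deltaCoder deg mu y) hx hDy
  have e1 : sgn p * sgn (p * q) = -sgn ((p + 1) * (q + 1)) * sgn q := by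
    rw [← sgn_add, ← sgn_succ, ← sgn_add]
    exact sgn_eq_of_even_sub ⟨-q - 1, by ring⟩
  have e2 : sgn p * sgn ((p - 1) * q) = -sgn ((p + 1) * (q + 1)) := by
    have h : -(sgn p * sgn ((p - 1) * q)) = sgn ((p + 1) * (q + 1)) := by
      rw [← sgn_add, ← sgn_succ]
      exact sgn_eq_of_even_sub ⟨-q, by ring⟩
    linarith
  have e3 : sgn (p * (q - 1)) = -(sgn ((p + 1) * (q + 1)) * sgn q) := by
    have h : -sgn (p * (q - 1)) = sgn ((p + 1) * (q + 1)) * sgn q := by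
      rw [← sgn_succ, ← sgn_add]
      exact sgn_eq_of_even_sub ⟨-p - q, by ring⟩
    linarith
  unfold brTA
  rw [h1, deltaCoder_zsmul, h2, h3]
  simp only [smul_sub, smul_smul]
  rw [e1, e2, e3]
  module


end
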